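/- Let E be a finite-dimensional real normed vector space (so that the closed unit ball of the norm is an origin-symmetric convex body). Let p_1, …, p_n be points of E and ρ_1, …, ρ_n > 0 real numbers, and let K_i denote the closed ball of radius ρ_i centered at p_i. Then there exists a subset S ⊆ {1, …, n} such that: (1) every point p_j (1 ≤ j ≤ n) lies in K_i for some i ∈ S, and (2) for all distinct i, j ∈ S, the point p_j does not lie in K_i (equivalently ‖p_j − p_i‖ > ρ_i); that is, the subfamily {K_i : i ∈ S} covers {p_1, …, p_n} and forms a strict Minkowski arrangement. -/
import Mathlib

/-- Auxiliary greedy lemma by strong induction on the set of indices. -/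
theorem stmt_2_aux {E : Type*} [NormedAddCommGroup E] {n : ℕ} (p : Fin n → E)
    (ρ : Fin n → ℝ) (hρ : ∀ i, 0 < ρ i) (T : Finset (Fin n)) :
    ∃ S ⊆ T,
      (∀ j ∈ T, ∃ i ∈ S, dist (p j) (p i) ≤ ρ i) ∧
      (∀ i ∈ S, ∀ j ∈ S, i ≠ j → ρ i < dist (p j) (p i)) := by
  induction T using Finset.strongInduction with
  | _ T ih =>
    rcases T.eq_empty_or_nonempty with rfl | hT
    · exact ⟨∅, Finset.Subset.refl _, by simp, by simp⟩
    · obtain ⟨i, hiT, hmax⟩ := T.exists_max_image ρ hT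
      set T' := T.filter (fun j => ρ i < dist (p j) (p i)) with hT'
      have hiT' : i ∉ T' := by
        simp [hT', hiT]
        exact (hρ i).le
      have hss : T' ⊂ T :=
        Finset.ssubset_iff_of_subset (Finset.filter_subset _ _) |>.mpr ⟨i, hiT, hiT'⟩
      obtain ⟨S', hS'T, hcov, hmink⟩ := ih T' hss
      have hiS' : i ∉ S' := fun h => hiT' (hS'T h)
      refine ⟨insert i S', ?_, ?_, ?_⟩
      · exact Finset.insert_subset hiT (hS'T.trans (Finset.filter_subset _ _))
      · intro j hj
        by_cases hcase : dist (p j) (p i) ≤ ρ i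
        · exact ⟨i, Finset.mem_insert_self _ _, hcase⟩
        · obtain ⟨k, hk, hk'⟩ := hcov j (by
            simp [hT', hj]
            exact lt_of_not_ge hcase)
          exact ⟨k, Finset.mem_insert_of_mem hk, hk'⟩
      · intro a ha b hb hab
        rcases Finset.mem_insert.mp ha with rfl | ha'
        · rcases Finset.mem_insert.mp hb with rfl | hb'
          · exact absurd rfl hab
          · have := hS'T hb'
            simp only [hT', Finset.mem_filter] at this
            exact this.2
        · rcases Finset.mem_insert.mp hb with rfl | hb'
          · have haT' := hS'T ha'
            simp only [hT', Finset.mem_filter] at haT'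
            have h1 : ρ a ≤ ρ b := hmax a haT'.1
            calc ρ a ≤ ρ b := h1
              _ < dist (p a) (p b) := haT'.2
              _ = dist (p b) (p a) := dist_comm _ _
          · exact hmink a ha' b hb' hab

/-- Greedy covering lemma: given points `p i` with radii `ρ i > 0` in a
finite-dimensional real normed space, there is a subfamily of the balls
`K i = closedBall (p i) (ρ i)` covering all the points and forming a strict
Minkowski arrangement (no member contains the center of another). -/
theorem stmt_2 {E : Type*} [NormedAddCommGroup E] [NormedSpace ℝ E]
    [FiniteDimensional ℝ E] {n : ℕ} (p : Fin n → E) (ρ : Fin n → ℝ)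
    (hρ : ∀ i, 0 < ρ i) :
    ∃ S : Finset (Fin n),
      (∀ j, ∃ i ∈ S, dist (p j) (p i) ≤ ρ i) ∧
      (∀ i ∈ S, ∀ j ∈ S, i ≠ j → ρ i < dist (p j) (p i)) := by
  obtain ⟨S, _, hcov, hmink⟩ := stmt_2_aux p ρ hρ Finset.univ
  exact ⟨S, fun j => hcov j (Finset.mem_univ j), hmink⟩
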